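/- Let d ∈ ℕ, τ ∈ ℝ, σ, γ, λ > 0 and θ > 1. There exists C ≥ 1, depending only on (d, θ), such that P_Mon,d(σ) ∩ P_Reg,d(τ, θ, γ, λ) ⊆ P_Mon,d(σ) ∩ P_Mar,d(τ, γ, λ/C^γ). -/

import Mathlib

open MeasureTheory ProbabilityTheory Real Set
open scoped ENNReal Classical

noncomputable section

/-- `log_+ x := log (x ∨ e)`. -/
def logp (x : ℝ) : ℝ := Real.log (max x (Real.exp 1))

/-- The σ-algebra generated by the covariate `X = Prod.fst`. -/
def mX (d : ℕ) : MeasurableSpace ((Fin d → ℝ) × ℝ) :=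
  MeasurableSpace.comap Prod.fst inferInstance

/-- `η` is (a version of) the regression function `x ↦ E[Y | X = x]` of `P`. -/
def IsRegFn (d : ℕ) (P : Measure ((Fin d → ℝ) × ℝ)) (η : (Fin d → ℝ) → ℝ) : Prop :=
  Measurable η ∧ (fun p => η p.1) =ᵐ[P] P[fun p => p.2 | mX d]

/-- Conditionally on `X`, `Y - η X` is sub-Gaussian with variance parameter `σ²`. -/
def CondSubG (d : ℕ) (σ : ℝ) (P : Measure ((Fin d → ℝ) × ℝ)) (η : (Fin d → ℝ) → ℝ) : Prop :=
  ∀ t : ℝ, Integrable (fun p => Real.exp (t * (p.2 - η p.1))) P ∧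
    (P[fun p => Real.exp (t * (p.2 - η p.1)) | mX d])
      ≤ᵐ[P] fun _ => Real.exp (σ ^ 2 * t ^ 2 / 2)

/-- The class `P_{Mon,d}(σ)`, as a predicate on the pair `(P, η)`. -/
def PMon (d : ℕ) (σ : ℝ) (P : Measure ((Fin d → ℝ) × ℝ)) (η : (Fin d → ℝ) → ℝ) : Prop :=
  IsProbabilityMeasure P ∧ IsRegFn d P η ∧ Monotone η ∧ CondSubG d σ P η

/-- The margin class `P_{Mar,d}(τ, β, ν)`, as a predicate on the pair `(P, η)`. -/
def PMar (d : ℕ) (τ β ν : ℝ) (P : Measure ((Fin d → ℝ) × ℝ)) (η : (Fin d → ℝ) → ℝ) : Prop :=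
  IsProbabilityMeasure P ∧ IsRegFn d P η ∧
    ∀ ξ : ℝ, ξ ∈ Set.Ioc (0 : ℝ) 1 →
      (P.map Prod.fst) (η ⁻¹' Set.Icc τ (τ + ν * ξ ^ β)) ≤ ENNReal.ofReal ξ

/-- Support of a Borel measure: the points all of whose open neighbourhoods have
positive measure. -/
def measSupport {α : Type*} [TopologicalSpace α] [MeasurableSpace α] (μ : Measure α) : Set α :=
  {x | ∀ U : Set α, IsOpen U → x ∈ U → 0 < μ U}

/-- The regularity class `P_{Reg,d}(τ, θ, γ, λ)`, as a predicate on the pair `(P, η)`. -/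
def PReg (d : ℕ) (τ θ γ lam : ℝ) (P : Measure ((Fin d → ℝ) × ℝ)) (η : (Fin d → ℝ) → ℝ) : Prop :=
  IsProbabilityMeasure P ∧ IsRegFn d P η ∧
    ∀ x ∈ {x | τ ≤ η x} ∩ measSupport (P.map Prod.fst), ∀ r : ℝ, r ∈ Set.Ioc (0:ℝ) 1 →
      (ENNReal.ofReal (θ⁻¹ * r ^ d) ≤ (P.map Prod.fst) (Metric.closedBall x r) ∧
        (P.map Prod.fst) (Metric.closedBall x r) ≤ ENNReal.ofReal (θ * (2 * r) ^ d)) ∧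
      (Metric.closedBall x r ∩ {z | τ + lam * r ^ γ ≤ η z}).Nonempty

/-- Indices `i` with `X i ≼ x`, ordered by increasing sup-norm distance to `x`,
ties broken by the original index ordering. -/
def nnOrder {d n : ℕ} (X : Fin n → (Fin d → ℝ)) (x : Fin d → ℝ) : List (Fin n) :=
  List.insertionSort
    (fun i j => ‖X i - x‖ < ‖X j - x‖ ∨ (‖X i - x‖ = ‖X j - x‖ ∧ i ≤ j))
    ((List.finRange n).filter (fun i => decide (X i ≤ x)))

/-- The martingale sums `S_k = ∑_{j=1}^k (Y_{(j)}(x) - τ)/σ`. -/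
def Smart {d n : ℕ} (σ τ : ℝ) (D : Fin n → (Fin d → ℝ) × ℝ) (x : Fin d → ℝ) (k : ℕ) : ℝ :=
  ((((nnOrder (fun i => (D i).1) x).take k).map (fun i => ((D i).2 - τ) / σ)).sum)

/-- The anytime-valid martingale p-value `p̂_{σ,τ}(x, D)`. -/
def phat {d n : ℕ} (σ τ : ℝ) (D : Fin n → (Fin d → ℝ) × ℝ) (x : Fin d → ℝ) : ℝ :=
  ((List.range (nnOrder (fun i => (D i).1) x).length).map (fun k =>
      5.2 * Real.exp (-(max (Smart σ τ D x (k + 1)) 0) ^ 2 / (2.0808 * (k + 1))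
        + Real.log (Real.log (2 * (k + 1))) / 0.72))).foldr min 1

/-- One iteration of the DAG testing procedure `R^ISS`. Edges point from parents to children:
`E a b` means `a` is a parent of `b`; `F` is the weight-one (polyforest) subrelation. -/
def RISSstep {I : Type*} [Fintype I] (E F : I → I → Prop) (α : ℝ) (p : I → ℝ)
    (R : Finset I) : Finset I :=
  let SL : Finset I := Finset.univ.filter (fun i => (∀ j, ¬ F i j) ∧ i ∉ R)
  let SC : Finset I := Finset.univ.filter (fun i => i ∉ R ∧ ∀ j, F j i → j ∈ R)
  let budget : I → ℝ := fun i =>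
    if i ∈ SC then
      ((SL.filter (fun j => j = i ∨ Relation.TransGen F i j)).card : ℝ) * α / (SL.card : ℝ)
    else 0
  let Il : Finset I := Finset.univ.filter (fun i => p i ≤ budget i)
  if Il = ∅ then R
  else R ∪ Il ∪ Finset.univ.filter (fun i => ∃ j ∈ Il, Relation.TransGen E i j)

/-- The DAG testing procedure `R^ISS_α` applied to a polyforest-weighted DAG `(I, E, w)`
(represented by the edge relation `E` and the weight-one subrelation `F`) and p-values `p`. -/
def RISS {I : Type*} [Fintype I] (E F : I → I → Prop) (α : ℝ) (p : I → ℝ) : Finset I :=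
  (RISSstep E F α p)^[Fintype.card I] ∅

/-- Edge relation of the DAG induced by the covariate points `z`. -/
def indE {d m : ℕ} (z : Fin m → (Fin d → ℝ)) (i0 i1 : Fin m) : Prop :=
  i0 ≠ i1 ∧ z i1 ≤ z i0 ∧ ∀ i2, z i1 ≤ z i2 → z i2 ≤ z i0 →
    (z i2 = z i0 ∧ i0 ≤ i2) ∨ (z i2 = z i1 ∧ i2 ≤ i1)

/-- Edge relation of the induced polyforest: among the induced-DAG parents of `i1`, keep the one
of minimal sup-norm distance to `z i1`, ties broken by smallest index. -/
def indF {d m : ℕ} (z : Fin m → (Fin d → ℝ)) (i0 i1 : Fin m) : Prop :=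
  indE z i0 i1 ∧ ∀ i, indE z i i1 →
    (‖z i0 - z i1‖ < ‖z i - z i1‖ ∨ (‖z i0 - z i1‖ = ‖z i - z i1‖ ∧ i0 ≤ i))

/-- The selection set `Â^{ISS}_{σ,τ,α,m}(D)`: the upper hull of the covariate points (among the
first `m` data points) whose hypotheses are rejected by `R^ISS` applied to the induced
polyforest-weighted DAG of `(X_1, …, X_m)` and the martingale p-values `p̂_{σ,τ}(X_i, D)`. -/
def AISS {d n : ℕ} (σ τ α : ℝ) (m : ℕ) (hm : m ≤ n)
    (D : Fin n → (Fin d → ℝ) × ℝ) : Set (Fin d → ℝ) :=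
  let z : Fin m → (Fin d → ℝ) := fun i => (D (Fin.castLE hm i)).1
  {x | ∃ i ∈ RISS (indE z) (indF z) α (fun i => phat σ τ D (z i)), z i ≤ x}

/-- `A` is a valid data-dependent selection set at level `α` for the class `PC`:
it is jointly measurable and satisfies the Type I error guarantee over `PC`. -/
def SelValid (d n : ℕ) (τ α : ℝ)
    (PC : Measure ((Fin d → ℝ) × ℝ) → ((Fin d → ℝ) → ℝ) → Prop)
    (A : (Fin n → (Fin d → ℝ) × ℝ) → Set (Fin d → ℝ)) : Prop :=
  MeasurableSet {q : (Fin n → (Fin d → ℝ) × ℝ) × (Fin d → ℝ) | q.2 ∈ A q.1} ∧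
  ∀ P η, PC P η →
    ENNReal.ofReal (1 - α) ≤ (Measure.pi fun _ : Fin n => P) {ω | A ω ⊆ {x | τ ≤ η x}}

end

section AuxProof

open TopologicalSpace

lemma aux_measSupport_compl_null {α : Type*} [TopologicalSpace α] [MeasurableSpace α]
    [SecondCountableTopology α] (μ : MeasureTheory.Measure α) :
    μ (measSupport μ)ᶜ = 0 := by
  obtain ⟨B, hBc, -, hB⟩ := exists_countable_basis α
  have hsub : (measSupport μ)ᶜ ⊆ ⋃₀ {V | V ∈ B ∧ μ V = 0} := by
    intro x hx
    simp only [measSupport, Set.mem_compl_iff, Set.mem_setOf_eq] at hx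
    push_neg at hx
    obtain ⟨U, hUo, hxU, hU0⟩ := hx
    have hU0' : μ U = 0 := le_antisymm hU0 zero_le
    obtain ⟨V, hVB, hxV, hVU⟩ := hB.exists_subset_of_mem_open hxU hUo
    exact ⟨V, ⟨hVB, le_antisymm ((measure_mono hVU).trans hU0'.le) zero_le⟩, hxV⟩
  refine measure_mono_null hsub ?_
  rw [measure_sUnion_null_iff (hBc.mono (fun V hV => hV.1))]
  exact fun s hs => hs.2

lemma aux_toNat_cast_le {m : ℤ} {x : ℝ} (hx : 0 ≤ x) (h : (m : ℝ) ≤ x) :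
    ((m.toNat : ℕ) : ℝ) ≤ x := by
  rcases le_or_gt m 0 with hm | hm
  · simpa [Int.toNat_of_nonpos hm] using hx
  · rw [show ((m.toNat : ℕ) : ℝ) = ((m.toNat : ℤ) : ℝ) by push_cast; ring,
      Int.toNat_of_nonneg hm.le]
    exact h


lemma aux_box_card (d : ℕ) (hd : 0 < d) (r : ℝ) (hr0 : 0 < r) (hr1 : r ≤ 1)
    (lo hi : Fin d → ℤ) (j0 : Fin d)
    (hwidth : ∀ j, ((hi j : ℝ)) - ((lo j : ℝ)) ≤ 4 / r + 1) :
    (((Fintype.piFinset (fun j => if j = j0 then ({0} : Finset ℤ)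
      else Finset.Icc (lo j - hi j0) (hi j - lo j0))).card : ℕ) : ℝ) ≤ (11 / r) ^ (d - 1) := by
  classical
  have hcard : (Fintype.piFinset (fun j => if j = j0 then ({0} : Finset ℤ)
      else Finset.Icc (lo j - hi j0) (hi j - lo j0))).card
      = ∏ j : Fin d, (if j = j0 then ({0} : Finset ℤ)
      else Finset.Icc (lo j - hi j0) (hi j - lo j0)).card := Fintype.card_piFinset _
  rw [hcard, Nat.cast_prod]
  have hstep : ∀ j : Fin d,
      (((if j = j0 then ({0} : Finset ℤ)
        else Finset.Icc (lo j - hi j0) (hi j - lo j0)).card : ℕ) : ℝ)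
        ≤ (if j = j0 then (1:ℝ) else 11 / r) := by
    intro j
    by_cases hj : j = j0
    · simp [hj]
    · rw [if_neg hj, if_neg hj, Int.card_Icc]
      have hpos11 : (0:ℝ) ≤ 11 / r := by positivity
      refine aux_toNat_cast_le hpos11 ?_
      have h1 := hwidth j
      have h2 := hwidth j0
      have h3 : (3:ℝ) ≤ 3 / r := by
        rw [le_div_iff₀ hr0]; linarith
      have h4 : (11:ℝ) / r = 4 / r + (4 / r + 3 / r) := by
        rw [← add_div, ← add_div]; norm_num
      push_cast
      linarith
  calc (∏ j : Fin d, (((if j = j0 then ({0} : Finset ℤ)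
        else Finset.Icc (lo j - hi j0) (hi j - lo j0)).card : ℕ) : ℝ))
      ≤ ∏ j : Fin d, (if j = j0 then (1:ℝ) else 11 / r) :=
        Finset.prod_le_prod (fun j _ => by positivity) (fun j _ => hstep j)
    _ = (11 / r) ^ (d - 1) := by
        rw [← Finset.mul_prod_erase Finset.univ _ (Finset.mem_univ j0), if_pos rfl, one_mul]
        rw [Finset.prod_congr rfl (fun j hj => if_neg (Finset.ne_of_mem_erase hj)),
          Finset.prod_const, Finset.card_erase_of_mem (Finset.mem_univ j0),
          Finset.card_univ, Fintype.card_fin]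


end AuxProof

/-- Proposition 2 (class containment): there exists `C ≥ 1`, depending only on `(d, θ)`, such
that `P_{Mon,d}(σ) ∩ P_{Reg,d}(τ,θ,γ,λ) ⊆ P_{Mon,d}(σ) ∩ P_{Mar,d}(τ, γ, λ/C^γ)`. -/
theorem statement10 (d : ℕ) (hd : 0 < d) (θ : ℝ) (hθ : 1 < θ) :
    ∃ C : ℝ, 1 ≤ C ∧
      ∀ (τ σ γ lam : ℝ), 0 < σ → 0 < γ → 0 < lam →
      ∀ (P : Measure ((Fin d → ℝ) × ℝ)) (η : (Fin d → ℝ) → ℝ),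
        PMon d σ P η ∧ PReg d τ θ γ lam P η →
        PMon d σ P η ∧ PMar d τ γ (lam / C ^ γ) P η := by
  classical
  have hθ0 : (0:ℝ) < θ := lt_trans one_pos hθ
  have hθ1 : (1:ℝ) ≤ θ := hθ.le
  have hθsq : (1:ℝ) ≤ θ ^ 2 := by nlinarith
  have h44d : (44:ℝ) ≤ 44 ^ d := le_self_pow₀ (by norm_num) hd.ne'
  obtain ⟨C, hC_def⟩ : ∃ c : ℝ, c = 44 ^ d * θ ^ 2 := ⟨_, rfl⟩
  have hC44 : (44:ℝ) ≤ C := by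
    rw [hC_def]
    calc (44:ℝ) ≤ 44 ^ d := h44d
    _ = 44 ^ d * 1 := (mul_one _).symm
    _ ≤ 44 ^ d * θ ^ 2 := by
        nlinarith [mul_nonneg (by positivity : (0:ℝ) ≤ (44:ℝ) ^ d) (sub_nonneg.2 hθsq)]
  have hC1 : (1:ℝ) ≤ C := by linarith
  have hC0 : (0:ℝ) < C := by linarith
  refine ⟨C, hC1, ?_⟩
  rintro τ σ γ lam hσ hγ hlam P η ⟨hMon, hReg⟩
  refine ⟨hMon, hMon.1, hMon.2.1, ?_⟩
  intro ξ hξ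
  obtain ⟨hξ0, hξ1⟩ := hξ
  haveI : IsProbabilityMeasure P := hMon.1
  obtain ⟨μ, hμ_def⟩ : ∃ m : Measure (Fin d → ℝ), m = P.map Prod.fst := ⟨_, rfl⟩
  haveI hμprob : IsProbabilityMeasure μ := by
    rw [hμ_def]; exact Measure.isProbabilityMeasure_map measurable_fst.aemeasurable
  obtain ⟨r, hr_def⟩ : ∃ x : ℝ, x = 2 * ξ / C := ⟨_, rfl⟩
  have hr0 : 0 < r := by rw [hr_def]; positivity
  have hrne : r ≠ 0 := hr0.ne'
  have hr1 : r ≤ 1 := by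
    rw [hr_def, div_le_one hC0]
    linarith
  obtain ⟨M, hM_def⟩ : ∃ m : ℝ, m = τ + lam / C ^ γ * ξ ^ γ := ⟨_, rfl⟩
  obtain ⟨S, hS_def⟩ : ∃ s : Set (Fin d → ℝ), s = η ⁻¹' Set.Icc τ M := ⟨_, rfl⟩
  obtain ⟨A, hA_def⟩ : ∃ a : Set (Fin d → ℝ), a = S ∩ measSupport μ := ⟨_, rfl⟩
  rw [← hμ_def, ← hM_def, ← hS_def]
  have hRegBall := hReg.2.2
  rw [← hμ_def] at hRegBall
  have hAT : ∀ x ∈ A, x ∈ {x | τ ≤ η x} ∩ measSupport μ := by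
    intro x hx
    rw [hA_def] at hx
    obtain ⟨hxS, hxsupp⟩ := hx
    rw [hS_def] at hxS
    exact ⟨(Set.mem_Icc.1 (Set.mem_preimage.1 hxS)).1, hxsupp⟩
  have hAS : ∀ x ∈ A, x ∈ S := by
    intro x hx
    rw [hA_def] at hx
    exact hx.1
  -- Lemma A : diagonal thinness of the band
  have key : ∀ x ∈ A, ∀ y : Fin d → ℝ, (∀ j, x j + r ≤ y j) → y ∉ S := by
    intro x hx y hy
    obtain ⟨-, hz⟩ := hRegBall x (hAT x hx) r ⟨hr0, hr1⟩
    obtain ⟨z, hzball, hzη⟩ := hz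
    have hzy : z ≤ y := by
      intro j
      have hd1 : dist (z j) (x j) ≤ r :=
        (dist_le_pi_dist z x j).trans (Metric.mem_closedBall.1 hzball)
      rw [Real.dist_eq] at hd1
      have h2 := (abs_le.1 hd1).2
      have h3 := hy j
      linarith
    have hmono : η z ≤ η y := hMon.2.2.1 hzy
    have hzη' : τ + lam * r ^ γ ≤ η z := hzη
    have hgt : M < τ + lam * r ^ γ := by
      have h2γ : (1:ℝ) < 2 ^ γ := by
        rw [Real.one_lt_rpow_iff_of_pos (by norm_num : (0:ℝ) < 2)]
        exact Or.inl ⟨one_lt_two, hγ⟩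
      have hrγ : r ^ γ = 2 ^ γ * ξ ^ γ / C ^ γ := by
        rw [hr_def, Real.div_rpow (by positivity) hC0.le,
          Real.mul_rpow (by norm_num) hξ0.le]
      have hpos : (0:ℝ) < lam * ξ ^ γ / C ^ γ := by
        have h1 : (0:ℝ) < ξ ^ γ := Real.rpow_pos_of_pos hξ0 γ
        have h2 : (0:ℝ) < C ^ γ := Real.rpow_pos_of_pos hC0 γ
        exact div_pos (mul_pos hlam h1) h2
      rw [hM_def, hrγ]
      have e1 : lam / C ^ γ * ξ ^ γ = lam * ξ ^ γ / C ^ γ := by ring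
      have e2 : lam * (2 ^ γ * ξ ^ γ / C ^ γ) = 2 ^ γ * (lam * ξ ^ γ / C ^ γ) := by ring
      rw [e1, e2]
      nlinarith [mul_pos (sub_pos.2 h2γ) hpos]
    intro hyS
    rw [hS_def] at hyS
    have : η y ≤ M := (Set.mem_Icc.1 (Set.mem_preimage.1 hyS)).2
    linarith
  -- the grid
  set j0 : Fin d := ⟨0, hd⟩ with hj0_def
  set idx : (Fin d → ℝ) → (Fin d → ℤ) := fun x j => ⌊x j / r⌋ with hidx_def
  have cube_lb : ∀ (x : Fin d → ℝ) (j : Fin d), ((idx x j : ℝ)) * r ≤ x j := by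
    intro x j
    have h1 : ((idx x j : ℝ)) ≤ x j / r := by
      simp only [hidx_def]; exact Int.floor_le _
    calc ((idx x j : ℝ)) * r ≤ (x j / r) * r := mul_le_mul_of_nonneg_right h1 hr0.le
      _ = x j := by field_simp
  have cube_ub : ∀ (x : Fin d → ℝ) (j : Fin d), x j < ((idx x j : ℝ) + 1) * r := by
    intro x j
    have h1 : x j / r < (idx x j : ℝ) + 1 := by
      simp only [hidx_def]; exact Int.lt_floor_add_one _
    calc x j = x j / r * r := by field_simp
      _ < ((idx x j : ℝ) + 1) * r := mul_lt_mul_of_pos_right h1 hr0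
  set ψ : (Fin d → ℤ) → (Fin d → ℤ) := fun k j => k j - k j0 with hψ_def
  obtain ⟨O, hO_def⟩ : ∃ o : Set (Fin d → ℤ), o = idx '' A := ⟨_, rfl⟩
  -- Fact B : at most two diagonal layers per class
  have factB : ∀ k ∈ O, ∀ k' ∈ O, ψ k' = ψ k → k' j0 ≤ k j0 + 1 := by
    intro k hk k' hk' hψeq
    rw [hO_def] at hk hk'
    obtain ⟨x, hxA, rfl⟩ := hk
    obtain ⟨x', hxA', rfl⟩ := hk'
    by_contra hcon
    push_neg at hcon
    have hstep : ∀ j, x j + r ≤ x' j := by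
      intro j
      have he : idx x' j - idx x' j0 = idx x j - idx x j0 := by
        have := congrFun hψeq j
        simpa [hψ_def] using this
      have hm' : idx x j + 2 ≤ idx x' j := by omega
      have h1 := cube_lb x' j
      have h2 := cube_ub x j
      have hcast : ((idx x j : ℝ)) + 2 ≤ ((idx x' j : ℝ)) := by exact_mod_cast hm'
      have h3 := mul_le_mul_of_nonneg_right hcast hr0.le
      linarith
    exact key x hxA x' hstep (hAS x' hxA')
  -- counting 2-separated subsets of A
  have hsep_card : ∀ F : Finset (Fin d → ℝ), ↑F ⊆ A →
      ((↑F : Set (Fin d → ℝ)).Pairwise fun a b => 2 < dist a b) → (F.card : ℝ) ≤ θ := by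
    intro F hFA hFpw
    have hdisj : (↑F : Set (Fin d → ℝ)).PairwiseDisjoint
        (fun w => Metric.closedBall w 1) := by
      intro a ha b hb hab
      exact Metric.closedBall_disjoint_closedBall (by have := hFpw ha hb hab; linarith)
    have hsum_eq : ∑ w ∈ F, μ (Metric.closedBall w 1) = μ (⋃ w ∈ F, Metric.closedBall w 1) :=
      (measure_biUnion_finset hdisj (fun w _ => measurableSet_closedBall)).symm
    have hone : ∀ w ∈ F, ENNReal.ofReal θ⁻¹ ≤ μ (Metric.closedBall w 1) := by
      intro w hw
      have h := (hRegBall w (hAT w (hFA hw)) 1 ⟨one_pos, le_refl 1⟩).1.1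
      simpa using h
    have hmain : (F.card : ℝ≥0∞) * ENNReal.ofReal θ⁻¹ ≤ 1 := by
      calc (F.card : ℝ≥0∞) * ENNReal.ofReal θ⁻¹
          = ∑ _w ∈ F, ENNReal.ofReal θ⁻¹ := by rw [Finset.sum_const, nsmul_eq_mul]
        _ ≤ ∑ w ∈ F, μ (Metric.closedBall w 1) := Finset.sum_le_sum hone
        _ = μ (⋃ w ∈ F, Metric.closedBall w 1) := hsum_eq
        _ ≤ 1 := prob_le_one
    have hmul : (F.card : ℝ≥0∞) * ENNReal.ofReal θ⁻¹ * ENNReal.ofReal θ ≤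
        1 * ENNReal.ofReal θ := mul_le_mul_left hmain _
    rw [mul_assoc, ← ENNReal.ofReal_mul (by positivity), inv_mul_cancel₀ hθ0.ne',
      ENNReal.ofReal_one, mul_one, one_mul] at hmul
    rw [← ENNReal.ofReal_natCast] at hmul
    exact (ENNReal.ofReal_le_ofReal_iff hθ0.le).1 hmul
  -- maximal 2-separated subset
  set Sep : Set ℕ := {n | ∃ F : Finset (Fin d → ℝ), ↑F ⊆ A ∧
    ((↑F : Set (Fin d → ℝ)).Pairwise fun a b => 2 < dist a b) ∧ F.card = n} with hSep_def
  have h0Sep : 0 ∈ Sep := ⟨∅, by simp, by simp, rfl⟩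
  have hbddSep : BddAbove Sep := by
    refine ⟨⌊θ⌋₊, ?_⟩
    rintro n ⟨F, hFA, hFpw, rfl⟩
    exact Nat.le_floor (hsep_card F hFA hFpw)
  obtain ⟨F, hFA, hFpw, hFcard⟩ := Nat.sSup_mem ⟨0, h0Sep⟩ hbddSep
  have hcover : ∀ x ∈ A, ∃ w ∈ F, dist x w ≤ 2 := by
    intro x hx
    by_contra hno
    push_neg at hno
    have hxF : x ∉ F := by
      intro h
      have h2 := hno x h
      rw [dist_self] at h2
      linarith
    have hnew : F.card + 1 ∈ Sep := by
      refine ⟨insert x F, ?_, ?_, ?_⟩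
      · rw [Finset.coe_insert]
        exact Set.insert_subset hx hFA
      · rw [Finset.coe_insert, Set.pairwise_insert]
        exact ⟨hFpw, fun b hb _ => ⟨hno b hb, by rw [dist_comm]; exact hno b hb⟩⟩
      · exact Finset.card_insert_of_notMem hxF
    have := le_csSup hbddSep hnew
    omega
  -- per-w boxes
  set lo : (Fin d → ℝ) → Fin d → ℤ := fun w j => ⌊(w j - 2) / r⌋ with hlo_def
  set hi : (Fin d → ℝ) → Fin d → ℤ := fun w j => ⌊(w j + 2) / r⌋ with hhi_def
  have hbnd : ∀ x ∈ A, ∀ w : Fin d → ℝ, dist x w ≤ 2 →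
      ∀ j, lo w j ≤ idx x j ∧ idx x j ≤ hi w j := by
    intro x _ w hxw j
    have h1 : |x j - w j| ≤ 2 := by
      have := (dist_le_pi_dist x w j).trans hxw
      rwa [Real.dist_eq] at this
    have h2 := abs_le.1 h1
    simp only [hlo_def, hhi_def, hidx_def]
    constructor
    · apply Int.floor_mono
      gcongr
      linarith [h2.2]
    · apply Int.floor_mono
      gcongr
      linarith [h2.1]
  -- O is finite
  have hOsub : O ⊆ ↑(F.biUnion (fun w =>
      Fintype.piFinset (fun j => Finset.Icc (lo w j) (hi w j)))) := by
    intro k hk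
    rw [hO_def] at hk
    obtain ⟨x, hxA, rfl⟩ := hk
    obtain ⟨w, hwF, hxw⟩ := hcover x hxA
    simp only [Finset.coe_biUnion, Set.mem_iUnion, Finset.mem_coe]
    exact ⟨w, hwF, Fintype.mem_piFinset.2 (fun j => Finset.mem_Icc.2 (hbnd x hxA w hxw j))⟩
  have hOfin : O.Finite := Set.Finite.subset (Finset.finite_toSet _) hOsub
  obtain ⟨O', hO'_def⟩ : ∃ f : Finset (Fin d → ℤ), f = hOfin.toFinset := ⟨_, rfl⟩
  have hO'mem : ∀ k, k ∈ O' ↔ k ∈ O := by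
    intro k
    rw [hO'_def]
    exact Set.Finite.mem_toFinset hOfin
  set Ψ : Finset (Fin d → ℤ) := O'.image ψ with hΨ_def
  -- fibers of ψ on O' have at most 2 elements
  have hfiber : ∀ c ∈ Ψ, (O'.filter (fun k => ψ k = c)).card ≤ 2 := by
    intro c hc
    set G : Finset (Fin d → ℤ) := O'.filter (fun k => ψ k = c) with hG_def
    have hGne : G.Nonempty := by
      obtain ⟨k, hk, hkc⟩ := Finset.mem_image.1 hc
      exact ⟨k, Finset.mem_filter.2 ⟨hk, hkc⟩⟩
    obtain ⟨k0, hk0G, hk0min⟩ := G.exists_min_image (fun k => k j0) hGne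
    have hinj : Set.InjOn (fun k : Fin d → ℤ => k j0) ↑G := by
      intro k hk k' hk' he
      have h1 : ψ k = c := (Finset.mem_filter.1 hk).2
      have h2 : ψ k' = c := (Finset.mem_filter.1 hk').2
      funext j
      have e1 : k j - k j0 = c j := by
        have := congrFun h1 j; simpa [hψ_def] using this
      have e2 : k' j - k' j0 = c j := by
        have := congrFun h2 j; simpa [hψ_def] using this
      simp only at he
      omega
    have himg : G.image (fun k => k j0) ⊆ Finset.Icc (k0 j0) (k0 j0 + 1) := by
      intro t ht
      obtain ⟨k, hkG, rfl⟩ := Finset.mem_image.1 ht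
      refine Finset.mem_Icc.2 ⟨hk0min k hkG, ?_⟩
      have hkO : k ∈ O := (hO'mem _).1 (Finset.mem_filter.1 hkG).1
      have hk0O : k0 ∈ O := (hO'mem _).1 (Finset.mem_filter.1 hk0G).1
      have hψeq : ψ k = ψ k0 := by
        rw [(Finset.mem_filter.1 hkG).2, (Finset.mem_filter.1 hk0G).2]
      exact factB k0 hk0O k hkO hψeq
    calc G.card = (G.image (fun k => k j0)).card := (Finset.card_image_of_injOn hinj).symm
      _ ≤ (Finset.Icc (k0 j0) (k0 j0 + 1)).card := Finset.card_le_card himg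
      _ ≤ 2 := by rw [Int.card_Icc]; omega
  have hcardO : O'.card ≤ 2 * Ψ.card := Finset.card_le_mul_card_image O' 2 hfiber
  -- bounding the number of classes
  set box : (Fin d → ℝ) → Finset (Fin d → ℤ) := fun w =>
    Fintype.piFinset (fun j => if j = j0 then ({0} : Finset ℤ)
      else Finset.Icc (lo w j - hi w j0) (hi w j - lo w j0)) with hbox_def
  have hΨsub : Ψ ⊆ F.biUnion box := by
    intro c hc
    obtain ⟨k, hkO', rfl⟩ := Finset.mem_image.1 hc
    have hkO := (hO'mem _).1 hkO'
    rw [hO_def] at hkO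
    obtain ⟨x, hxA, rfl⟩ := hkO
    obtain ⟨w, hwF, hxw⟩ := hcover x hxA
    refine Finset.mem_biUnion.2 ⟨w, hwF, ?_⟩
    simp only [hbox_def]
    refine Fintype.mem_piFinset.2 (fun j => ?_)
    by_cases hj : j = j0
    · subst hj
      simp [hψ_def]
    · rw [if_neg hj]
      have h1 := hbnd x hxA w hxw j
      have h2 := hbnd x hxA w hxw j0
      refine Finset.mem_Icc.2 ⟨?_, ?_⟩ <;> simp only [hψ_def] <;> omega
  have hfloor4 : ∀ (u : ℝ), ((⌊(u + 2) / r⌋ : ℝ)) - ((⌊(u - 2) / r⌋ : ℝ)) ≤ 4 / r + 1 := by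
    intro u
    have h1 := Int.floor_le ((u + 2) / r)
    have h2 := Int.lt_floor_add_one ((u - 2) / r)
    have h3 : (u + 2) / r - (u - 2) / r = 4 / r := by
      rw [div_sub_div_same]
      congr 1
      ring
    linarith
  have hbox_card : ∀ w : Fin d → ℝ, ((box w).card : ℝ) ≤ (11 / r) ^ (d - 1) := by
    intro w
    have hwidth : ∀ j, ((hi w j : ℝ)) - ((lo w j : ℝ)) ≤ 4 / r + 1 := by
      intro j
      simp only [hlo_def, hhi_def]
      exact hfloor4 (w j)
    simpa only [hbox_def] using
      aux_box_card d hd r hr0 hr1 (lo w) (hi w) j0 hwidth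
  have hcardΨ : (Ψ.card : ℝ) ≤ θ * (11 / r) ^ (d - 1) := by
    have h1 : Ψ.card ≤ ∑ w ∈ F, (box w).card :=
      (Finset.card_le_card hΨsub).trans Finset.card_biUnion_le
    have h3 : (F.card : ℝ) * (11 / r) ^ (d - 1) ≤ θ * (11 / r) ^ (d - 1) :=
      mul_le_mul_of_nonneg_right (hsep_card F hFA hFpw) (by positivity)
    calc (Ψ.card : ℝ) ≤ ((∑ w ∈ F, (box w).card : ℕ) : ℝ) := by exact_mod_cast h1
      _ ≤ (F.card : ℝ) * (11 / r) ^ (d - 1) := by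
          push_cast
          calc ∑ w ∈ F, ((box w).card : ℝ) ≤ ∑ _w ∈ F, (11 / r) ^ (d - 1) :=
                Finset.sum_le_sum (fun w _ => hbox_card w)
            _ = (F.card : ℝ) * (11 / r) ^ (d - 1) := by
                rw [Finset.sum_const, nsmul_eq_mul]
      _ ≤ θ * (11 / r) ^ (d - 1) := h3
  -- measure of each occupied cube
  have hcube_meas : ∀ k ∈ O', μ (idx ⁻¹' {k}) ≤ ENNReal.ofReal (θ * (2 * r) ^ d) := by
    intro k hk
    have hkO := (hO'mem _).1 hk
    rw [hO_def] at hkO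
    obtain ⟨x, hxA, rfl⟩ := hkO
    have hsub : idx ⁻¹' {idx x} ⊆ Metric.closedBall x r := by
      intro y hy
      have hyx : idx y = idx x := Set.mem_singleton_iff.1 (Set.mem_preimage.1 hy)
      rw [Metric.mem_closedBall]
      refine (dist_pi_le_iff hr0.le).2 (fun j => ?_)
      have h1 : idx y j = idx x j := congrFun hyx j
      have h2 := cube_lb y j
      have h3 := cube_ub y j
      have h4 := cube_lb x j
      have h5 := cube_ub x j
      rw [h1] at h2 h3
      rw [Real.dist_eq, abs_le]
      constructor <;> linarith
    exact (measure_mono hsub).trans ((hRegBall x (hAT x hxA) r ⟨hr0, hr1⟩).1.2)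
  -- putting everything together
  have hSA : μ S ≤ μ A := by
    have hsub : S ⊆ A ∪ (measSupport μ)ᶜ := by
      intro x hx
      by_cases hs : x ∈ measSupport μ
      · exact Or.inl (by rw [hA_def]; exact ⟨hx, hs⟩)
      · exact Or.inr hs
    calc μ S ≤ μ (A ∪ (measSupport μ)ᶜ) := measure_mono hsub
      _ ≤ μ A + μ (measSupport μ)ᶜ := measure_union_le _ _
      _ = μ A := by rw [aux_measSupport_compl_null, add_zero]
  have hAcover : A ⊆ ⋃ k ∈ O', idx ⁻¹' {k} := by
    intro x hx
    refine Set.mem_biUnion ((hO'mem _).2 ?_) rfl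
    rw [hO_def]
    exact ⟨x, hx, rfl⟩
  have hmeasA : μ A ≤ (O'.card : ℝ≥0∞) * ENNReal.ofReal (θ * (2 * r) ^ d) := by
    calc μ A ≤ μ (⋃ k ∈ O', idx ⁻¹' {k}) := measure_mono hAcover
      _ ≤ ∑ k ∈ O', μ (idx ⁻¹' {k}) := measure_biUnion_finset_le _ _
      _ ≤ ∑ _k ∈ O', ENNReal.ofReal (θ * (2 * r) ^ d) := Finset.sum_le_sum hcube_meas
      _ = (O'.card : ℝ≥0∞) * ENNReal.ofReal (θ * (2 * r) ^ d) := by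
          rw [Finset.sum_const, nsmul_eq_mul]
  -- the final real-number computation
  have hq0 : (0:ℝ) ≤ θ * (2 * r) ^ d := by
    have : (0:ℝ) ≤ 2 * r := by linarith
    exact mul_nonneg hθ0.le (pow_nonneg this d)
  have hd1 : d - 1 + 1 = d := Nat.succ_pred_eq_of_pos hd
  have hbase : 11 / r * (2 * r) = 22 := by
    field_simp
    ring
  have hpow : (11 / r) ^ (d - 1) * (2 * r) ^ d = 22 ^ (d - 1) * (2 * r) := by
    have h1 : (2 * r) ^ (d - 1) * (2 * r) = (2 * r) ^ d := by rw [← pow_succ, hd1]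
    rw [← h1, ← mul_assoc, ← mul_pow, hbase]
  have hfinal : (O'.card : ℝ) * (θ * (2 * r) ^ d) ≤ ξ := by
    have hcard' : (O'.card : ℝ) ≤ 2 * (θ * (11 / r) ^ (d - 1)) := by
      calc (O'.card : ℝ) ≤ ((2 * Ψ.card : ℕ) : ℝ) := by exact_mod_cast hcardO
        _ = 2 * (Ψ.card : ℝ) := by push_cast; ring
        _ ≤ 2 * (θ * (11 / r) ^ (d - 1)) := by linarith
    have step1 : (O'.card : ℝ) * (θ * (2 * r) ^ d)
        ≤ 2 * (θ * (11 / r) ^ (d - 1)) * (θ * (2 * r) ^ d) :=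
      mul_le_mul_of_nonneg_right hcard' hq0
    have step2 : 2 * (θ * (11 / r) ^ (d - 1)) * (θ * (2 * r) ^ d)
        = 2 * θ ^ 2 * (22 ^ (d - 1) * (2 * r)) := by
      calc 2 * (θ * (11 / r) ^ (d - 1)) * (θ * (2 * r) ^ d)
          = 2 * θ ^ 2 * ((11 / r) ^ (d - 1) * (2 * r) ^ d) := by ring
        _ = 2 * θ ^ 2 * (22 ^ (d - 1) * (2 * r)) := by rw [hpow]
    have step3 : 2 * θ ^ 2 * (22 ^ (d - 1) * (2 * r)) ≤ ξ := by
      have hr2 : 2 * r = 4 * ξ / C := by rw [hr_def]; ring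
      have key8 : 8 * (22:ℝ) ^ (d - 1) ≤ 44 ^ d := by
        have h22 : (22:ℝ) ^ (d - 1) ≤ 44 ^ (d - 1) :=
          pow_le_pow_left₀ (by norm_num) (by norm_num) _
        have h44e : (44:ℝ) ^ (d - 1) * 44 = 44 ^ d := by rw [← pow_succ, hd1]
        rw [← h44e]
        linarith
      have hCne : C ≠ 0 := hC0.ne'
      have e : 2 * θ ^ 2 * (22 ^ (d - 1) * (4 * ξ / C)) = 8 * 22 ^ (d - 1) * θ ^ 2 * ξ / C := by
        field_simp
        ring
      rw [hr2, e, div_le_iff₀ hC0, hC_def]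
      have hgoal := mul_le_mul_of_nonneg_right key8
        (mul_nonneg (sq_nonneg θ) hξ0.le)
      calc 8 * (22:ℝ) ^ (d - 1) * θ ^ 2 * ξ = 8 * 22 ^ (d - 1) * (θ ^ 2 * ξ) := by ring
        _ ≤ 44 ^ d * (θ ^ 2 * ξ) := hgoal
        _ = ξ * (44 ^ d * θ ^ 2) := by ring
    exact step1.trans ((le_of_eq step2).trans step3)
  calc μ S ≤ μ A := hSA
    _ ≤ (O'.card : ℝ≥0∞) * ENNReal.ofReal (θ * (2 * r) ^ d) := hmeasA
    _ = ENNReal.ofReal ((O'.card : ℝ) * (θ * (2 * r) ^ d)) := by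
        rw [← ENNReal.ofReal_natCast O'.card, ← ENNReal.ofReal_mul (by positivity)]
    _ ≤ ENNReal.ofReal ξ := ENNReal.ofReal_le_ofReal hfinal
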